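/- Suppose a, b are elements of a group G acting on a set X, and there exist disjoint nonempty subsets A, B ⊆ X with a^p • B ⊆ A for all p ≠ 0 and b^q • A ⊆ B for all q ≠ 0. Then no nontrivial alternating product a^{p_1} b^{q_1} a^{p_2} b^{q_2} ... (all exponents nonzero) equals the identity; equivalently ⟨a⟩ ∩ ⟨b⟩ = {1} and ⟨a, b⟩ ≅ ℤ * ℤ. -/

import Mathlib

namespace PP17

variable {G X : Type*} [Group G] [MulAction G X] {a b : G} {A B : Set X}

lemma pp_core (ha : ∀ p : ℤ, p ≠ 0 → ∀ x ∈ B, a ^ p • x ∈ A)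
    (hb : ∀ q : ℤ, q ≠ 0 → ∀ x ∈ A, b ^ q • x ∈ B) :
    ∀ l : List (Bool × ℤ), ∀ hl : l ≠ [],
      l.Chain' (fun s t => s.1 ≠ t.1) → (∀ s ∈ l, s.2 ≠ 0) →
      ∀ x ∈ (if (l.getLast hl).1 then B else A),
        (l.map (fun s => (if s.1 then a else b) ^ s.2)).prod • x ∈
          (if (l.head hl).1 then A else B) := by
  intro l
  induction l with
  | nil => simp
  | cons s l ih =>
    intro _ hch hnz x hx
    cases l with
    | nil =>
      simp only [List.getLast_singleton] at hx
      simp only [List.map_cons, List.map_nil, List.prod_cons, List.prod_nil, mul_one,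
        List.head_cons]
      rcases s with ⟨g, e⟩
      have he : e ≠ 0 := hnz (g, e) (by simp)
      cases g with
      | true => simp only [if_true] at hx ⊢; exact ha e he x hx
      | false => simp only [if_false] at hx ⊢; exact hb e he x hx
    | cons t l' =>
      have hch' : (t :: l').Chain' (fun s t => s.1 ≠ t.1) := hch.tail
      have hst : s.1 ≠ t.1 := (List.isChain_cons_cons.mp hch).1
      have hlast : ((s :: t :: l').getLast (by simp)) = ((t :: l').getLast (by simp)) := by
        simp [List.getLast_cons]
      rw [hlast] at hx
      have hmem := ih (by simp) hch' (fun u hu => hnz u (List.mem_cons_of_mem _ hu)) x hx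
      simp only [List.map_cons, List.prod_cons, List.head_cons] at hmem ⊢
      rw [mul_smul]
      rcases s with ⟨g, e⟩
      have he : e ≠ 0 := hnz (g, e) (by simp)
      cases g with
      | true =>
        have : t.1 = false := by revert hst; cases t.1 <;> simp
        simp only [this] at hmem ⊢
        simp only [if_true, if_neg (by decide : ¬(false = true))] at hmem ⊢
        exact ha e he _ hmem
      | false =>
        have : t.1 = true := by revert hst; cases t.1 <;> simp
        simp only [this] at hmem ⊢
        simp only [if_true, if_neg (by decide : ¬(false = true))] at hmem ⊢
        exact hb e he _ hmem


lemma pp_ne_one (hA : A.Nonempty) (hB : B.Nonempty) (hd : Disjoint A B)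
    (ha : ∀ p : ℤ, p ≠ 0 → ∀ x ∈ B, a ^ p • x ∈ A)
    (hb : ∀ q : ℤ, q ≠ 0 → ∀ x ∈ A, b ^ q • x ∈ B) :
    ∀ l : List (Bool × ℤ), ∀ _ : l ≠ [],
      l.Chain' (fun s t => s.1 ≠ t.1) → (∀ s ∈ l, s.2 ≠ 0) →
      (l.map (fun s => (if s.1 then a else b) ^ s.2)).prod ≠ 1 := by
  intro l hl hch hnz hw
  by_cases hht : (l.head hl).1 = (l.getLast hl).1
  · -- same ends: direct contradiction
    cases hh : (l.head hl).1 with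
    | true =>
      obtain ⟨x, hx⟩ := hB
      have := pp_core ha hb l hl hch hnz x (by rw [← hht, hh]; simpa using hx)
      rw [hw, one_smul, hh] at this
      simp only [if_true] at this
      exact Set.disjoint_left.mp hd this hx
    | false =>
      obtain ⟨x, hx⟩ := hA
      have := pp_core ha hb l hl hch hnz x (by rw [← hht, hh]; simpa using hx)
      rw [hw, one_smul, hh] at this
      simp only [if_neg (by decide : ¬(false = true))] at this
      exact Set.disjoint_left.mp hd hx this
  · -- mixed ends
    rcases List.eq_nil_or_concat l with rfl | ⟨l₀, u, hconc⟩
    · exact hl rfl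
    have hE : l = l₀ ++ [u] := by rw [hconc, List.concat_eq_append]
    clear hconc
    subst hE
    have hgl : (l₀ ++ [u]).getLast hl = u := by
      simp [List.getLast_append]
    have hl₀ : l₀ ≠ [] := by
      rintro rfl
      exact hht (by simp [List.getLast_singleton])
    have hhd : (l₀ ++ [u]).head hl = l₀.head hl₀ := List.head_append_of_ne_nil hl₀
    have hch₀ : l₀.Chain' (fun s t => s.1 ≠ t.1) := (List.isChain_append.mp hch).1
    have hnz₀ : ∀ s ∈ l₀, s.2 ≠ 0 := fun s hs => hnz s (List.mem_append_left _ hs)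
    have hlastrel : (l₀.getLast hl₀).1 ≠ u.1 :=
      (List.isChain_append.mp hch).2.2 _ (by rw [List.getLast?_eq_getLast hl₀]; rfl) u rfl
    have hnzu : u.2 ≠ 0 := hnz u (by simp)
    set sE : ℤ := if u.2 = 1 then 2 else 1 with hsE
    have hs0 : sE ≠ 0 := by rw [hsE]; split <;> decide
    have hsu : -u.2 + sE ≠ 0 := by rw [hsE]; split <;> omega
    have hprod : (l₀.map (fun s => (if s.1 then a else b) ^ s.2)).prod
        = ((if u.1 then a else b) ^ u.2)⁻¹ := by
      rw [List.map_append, List.prod_append] at hw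
      simp only [List.map_cons, List.map_nil, List.prod_cons, List.prod_nil, mul_one] at hw
      exact mul_eq_one_iff_eq_inv.mp hw
    rw [hgl, hhd] at hht
    cases hu1 : u.1 with
    | false =>
      have hhd1 : (l₀.head hl₀).1 = true := by
        rw [hu1] at hht; revert hht; cases (l₀.head hl₀).1 <;> simp
      have hll1 : (l₀.getLast hl₀).1 = true := by
        rw [hu1] at hlastrel; revert hlastrel; cases (l₀.getLast hl₀).1 <;> simp
      obtain ⟨x, hx⟩ := hA
      have hy : b ^ sE • x ∈ B := hb sE hs0 x hx
      have hmem := pp_core ha hb l₀ hl₀ hch₀ hnz₀ (b ^ sE • x) (by rw [hll1]; simpa using hy)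
      rw [hhd1] at hmem
      simp only [if_true] at hmem
      rw [hprod, hu1] at hmem
      simp only [if_neg (by decide : ¬(false = true))] at hmem
      rw [← zpow_neg, smul_smul, ← zpow_add] at hmem
      have : b ^ (-u.2 + sE) • x ∈ B := hb _ hsu x hx
      exact Set.disjoint_left.mp hd hmem this
    | true =>
      have hhd1 : (l₀.head hl₀).1 = false := by
        rw [hu1] at hht; revert hht; cases (l₀.head hl₀).1 <;> simp
      have hll1 : (l₀.getLast hl₀).1 = false := by
        rw [hu1] at hlastrel; revert hlastrel; cases (l₀.getLast hl₀).1 <;> simp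
      obtain ⟨x, hx⟩ := hB
      have hy : a ^ sE • x ∈ A := ha sE hs0 x hx
      have hmem := pp_core ha hb l₀ hl₀ hch₀ hnz₀ (a ^ sE • x) (by rw [hll1]; simpa using hy)
      rw [hhd1] at hmem
      simp only [if_neg (by decide : ¬(false = true))] at hmem
      rw [hprod, hu1] at hmem
      simp only [if_true] at hmem
      rw [← zpow_neg, smul_smul, ← zpow_add] at hmem
      have : a ^ (-u.2 + sE) • x ∈ A := ha _ hsu x hx
      exact Set.disjoint_left.mp hd this hmem


lemma reduced_chain' {α : Type*} [DecidableEq α] :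
    ∀ L : List (α × Bool), FreeGroup.reduce L = L →
      L.Chain' (fun s t : α × Bool => ¬(s.1 = t.1 ∧ s.2 = !t.2)) := by
  intro L
  induction L with
  | nil => intro _; exact List.isChain_nil
  | cons x L ih =>
    intro h
    rw [FreeGroup.reduce.cons] at h
    rcases hr : FreeGroup.reduce L with _ | ⟨y, t⟩
    · rw [hr] at h
      have : L = [] := by simpa using h.symm
      subst this
      exact List.isChain_singleton _
    · rw [hr] at h
      dsimp only at h
      by_cases hc : x.1 = y.1 ∧ x.2 = !y.2
      · rw [if_pos hc] at h
        exfalso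
        have hlen : (FreeGroup.reduce L).length ≤ L.length :=
          FreeGroup.Red.length_le (FreeGroup.reduce.red)
        rw [hr] at hlen
        have : t = x :: L := h
        rw [this] at hlen
        simp at hlen
      · rw [if_neg hc] at h
        have hL : L = y :: t := by
          injection h with _ h2
          exact h2.symm
        have hred : FreeGroup.reduce L = L := by rw [hr, hL]
        have hchL := ih hred
        rw [hL]
        rw [hL] at hchL
        exact List.isChain_cons_cons.mpr ⟨hc, hchL⟩


def tosyl {α : Type*} [DecidableEq α] : List (α × Bool) → List (α × ℤ)
  | [] => []
  | (g, s) :: rest =>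
    match tosyl rest with
    | [] => [(g, cond s 1 (-1))]
    | (g', e) :: t =>
      if g = g' then (g, cond s 1 (-1) + e) :: t
      else (g, cond s 1 (-1)) :: (g', e) :: t

lemma tosyl_spec {α : Type*} [DecidableEq α] {G : Type*} [Group G] (f : α → G) :
    ∀ L : List (α × Bool), L.Chain' (fun s t : α × Bool => ¬(s.1 = t.1 ∧ s.2 = !t.2)) →
      (tosyl L).Chain' (fun s t => s.1 ≠ t.1) ∧
      (∀ s ∈ tosyl L, s.2 ≠ 0) ∧
      ((tosyl L).map fun s => f s.1 ^ s.2).prod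
        = (L.map fun x => cond x.2 (f x.1) (f x.1)⁻¹).prod ∧
      (∀ g s L', L = (g, s) :: L' →
        ∃ e t, tosyl L = (g, e) :: t ∧ (if s then 0 < e else e < 0)) := by
  intro L
  induction L with
  | nil =>
    intro _
    refine ⟨List.isChain_nil, by simp [tosyl], by simp [tosyl], by simp⟩
  | cons x L ih =>
    intro hch
    obtain ⟨g, s⟩ := x
    obtain ⟨ich, inz, iprod, ihd⟩ := ih hch.tail
    rcases hr : tosyl L with _ | ⟨⟨g', e⟩, t⟩
    · -- tosyl L = []
      have hL : L = [] := by
        rcases L with _ | ⟨⟨gh, sh⟩, L'⟩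
        · rfl
        · obtain ⟨e, t, het, -⟩ := ihd gh sh L' rfl
          rw [hr] at het
          exact absurd het (by simp)
      subst hL
      have hstep : tosyl [(g, s)] = [(g, cond s 1 (-1))] := by simp [tosyl]
      refine ⟨by rw [hstep]; exact List.isChain_singleton _, ?_, ?_, ?_⟩
      · rw [hstep]
        intro u hu
        simp at hu
        rw [hu]
        cases s <;> simp
      · rw [hstep]
        simp
        cases s <;> simp
      · intro g0 s0 L' hL'
        injection hL' with h1 h2
        injection h1 with h3 h4
        subst h3; subst h4; subst h2
        exact ⟨cond s 1 (-1), [], hstep, by cases s <;> simp⟩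
    · -- tosyl L = (g', e) :: t
      rcases L with _ | ⟨⟨gh, sh⟩, L'⟩
      · simp [tosyl] at hr
      obtain ⟨e0, t0, het, hsgn0⟩ := ihd gh sh L' rfl
      rw [hr] at het
      injection het with h1 h2
      injection h1 with h3 h4
      subst h3; subst h4; subst h2
      have hrel : ¬(g = g' ∧ s = !sh) := (List.isChain_cons_cons.mp hch).1
      by_cases hgg : g = g'
      · -- merge
        have hss : s = sh := by
          rcases Bool.eq_or_eq_not s sh with h | h
          · exact h
          · exact absurd ⟨hgg, h⟩ hrel
        subst hss
        have hsgn : if s then 0 < e else e < 0 := hsgn0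
        have hnewnz : cond s 1 (-1) + e ≠ 0 ∧
            (if s then 0 < cond s 1 (-1) + e else cond s 1 (-1) + e < 0) := by
          cases s <;> simp at hsgn ⊢ <;> omega
        have hstep : tosyl ((g, s) :: (g', s) :: L') = (g, cond s 1 (-1) + e) :: t := by
          have heq : tosyl ((g, s) :: (g', s) :: L') =
              match tosyl ((g', s) :: L') with
              | [] => [(g, cond s 1 (-1))]
              | (g'', e') :: t' => if g = g'' then (g, cond s 1 (-1) + e') :: t'
                  else (g, cond s 1 (-1)) :: (g'', e') :: t' := rfl
          rw [heq, hr]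
          simp only [if_pos hgg]
        refine ⟨?_, ?_, ?_, ?_⟩
        · rw [hstep]
          rw [hr] at ich
          rcases t with _ | ⟨v, t'⟩
          · exact List.isChain_singleton _
          · exact List.isChain_cons_cons.mpr ⟨by rw [hgg]; exact (List.isChain_cons_cons.mp ich).1,
              (List.isChain_cons_cons.mp ich).2⟩
        · rw [hstep]
          intro u hu
          rcases List.mem_cons.mp hu with rfl | hu
          · exact hnewnz.1
          · exact inz u (by rw [hr]; exact List.mem_cons_of_mem _ hu)
        · rw [hstep]
          conv_rhs => rw [List.map_cons, List.prod_cons, ← iprod, hr]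
          simp only [List.map_cons, List.prod_cons, ← mul_assoc]
          congr 1
          rw [zpow_add, hgg]
          congr 1
          cases s <;> simp
        · intro g0 s0 L0 hL0
          injection hL0 with h1 h2
          injection h1 with h3 h4
          subst h3; subst h4
          exact ⟨cond s 1 (-1) + e, t, hstep, hnewnz.2⟩
      · -- no merge
        have hstep : tosyl ((g, s) :: (g', sh) :: L') = (g, cond s 1 (-1)) :: (g', e) :: t := by
          have heq : tosyl ((g, s) :: (g', sh) :: L') =
              match tosyl ((g', sh) :: L') with
              | [] => [(g, cond s 1 (-1))]
              | (g'', e') :: t' => if g = g'' then (g, cond s 1 (-1) + e') :: t'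
                  else (g, cond s 1 (-1)) :: (g'', e') :: t' := rfl
          rw [heq, hr]
          simp only [if_neg hgg]
        refine ⟨?_, ?_, ?_, ?_⟩
        · rw [hstep]
          rw [hr] at ich
          exact List.isChain_cons_cons.mpr ⟨hgg, ich⟩
        · rw [hstep]
          intro u hu
          rcases List.mem_cons.mp hu with rfl | hu
          · cases s <;> simp
          · exact inz u (by rw [hr]; exact hu)
        · rw [hstep]
          conv_rhs => rw [List.map_cons, List.prod_cons, ← iprod, hr]
          simp only [List.map_cons, List.prod_cons, ← mul_assoc]
          congr 2
          cases s <;> simp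
        · intro g0 s0 L0 hL0
          injection hL0 with h1 h2
          injection h1 with h3 h4
          subst h3; subst h4
          exact ⟨cond s 1 (-1), (g', e) :: t, hstep, by cases s <;> simp⟩

end PP17



/-- Two-element ping-pong: if `a, b ∈ G` act on `X` with disjoint nonempty subsets `A, B`
satisfying `a ^ p • B ⊆ A` and `b ^ q • A ⊆ B` for all nonzero `p, q`, then no nonempty
alternating product of nonzero powers of `a` and `b` equals the identity; equivalently
`⟨a⟩ ∩ ⟨b⟩ = {1}` and `⟨a, b⟩ ≅ ℤ * ℤ` (the free group on two generators). -/
theorem stmt17 {G X : Type*} [Group G] [MulAction G X] (a b : G)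
    (A B : Set X) (hA : A.Nonempty) (hB : B.Nonempty) (hd : Disjoint A B)
    (ha : ∀ p : ℤ, p ≠ 0 → ∀ x ∈ B, a ^ p • x ∈ A)
    (hb : ∀ q : ℤ, q ≠ 0 → ∀ x ∈ A, b ^ q • x ∈ B) :
    (∀ r : ℕ, 0 < r → ∀ gen : Fin r → Bool,
      (∀ t : Fin r, ∀ ht : t.val + 1 < r, gen t ≠ gen ⟨t.val + 1, ht⟩) →
      ∀ e : Fin r → ℤ, (∀ t, e t ≠ 0) →
      (List.ofFn (fun t => (if gen t then a else b) ^ e t)).prod ≠ 1) ∧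
    (Subgroup.closure ({a} : Set G)) ⊓ (Subgroup.closure ({b} : Set G)) = ⊥ ∧
    Nonempty ((Subgroup.closure ({a, b} : Set G)) ≃* FreeGroup Bool) := by
  have key := PP17.pp_ne_one hA hB hd ha hb
  refine ⟨?_, ?_, ?_⟩
  · intro r hr gen hgen e he hcontra
    set l : List (Bool × ℤ) := List.ofFn (fun t => (gen t, e t)) with hldef
    have hl : l ≠ [] := by
      intro h
      have := congrArg List.length h
      rw [hldef] at this
      simp at this
      omega
    have hch : l.Chain' (fun s t => s.1 ≠ t.1) := by
      rw [hldef]; simp only [List.Chain']; rw [List.isChain_iff_getElem]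
      intro i hi
      simp only [List.length_ofFn] at hi
      rw [List.getElem_ofFn, List.getElem_ofFn]
      intro hcontra2
      have hi' : i + 1 < r := by omega
      have := hgen ⟨i, by omega⟩ hi'
      apply this
      convert hcontra2 using 2 <;> apply Fin.ext <;> simp
    have hnz : ∀ s ∈ l, s.2 ≠ 0 := by
      intro s hs
      rw [hldef, List.mem_ofFn] at hs
      obtain ⟨t, rfl⟩ := hs
      exact he t
    apply key l hl hch hnz
    rw [hldef, List.map_ofFn]
    exact hcontra
  · rw [eq_bot_iff]
    intro g hg
    rw [Subgroup.mem_inf] at hg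
    obtain ⟨p, hp⟩ := Subgroup.mem_closure_singleton.mp hg.1
    obtain ⟨q, hq⟩ := Subgroup.mem_closure_singleton.mp hg.2
    rw [Subgroup.mem_bot]
    by_contra hg1
    have hp0 : p ≠ 0 := by rintro rfl; rw [zpow_zero] at hp; exact hg1 hp.symm
    have hq0 : q ≠ 0 := by rintro rfl; rw [zpow_zero] at hq; exact hg1 hq.symm
    apply key [(true, p), (false, -q)] (by simp) (by simp [List.Chain'])
      (by
        intro s hs
        rcases List.mem_cons.mp hs with rfl | hs
        · exact hp0
        · rcases List.mem_cons.mp hs with rfl | hs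
          · simpa using hq0
          · simp at hs)
    simp only [List.map_cons, List.map_nil, List.prod_cons, List.prod_nil, mul_one,
      if_true, if_neg (by decide : ¬(false = true))]
    rw [hp, zpow_neg, hq, mul_inv_cancel]
  · set f : Bool → G := fun i => if i then a else b with hf
    have hinj : Function.Injective (FreeGroup.lift f) := by
      rw [injective_iff_map_eq_one]
      intro x hx
      by_contra hx1
      have hLne : FreeGroup.toWord x ≠ [] := fun h => hx1 (FreeGroup.toWord_eq_nil_iff.mp h)
      have hred := PP17.reduced_chain' (FreeGroup.toWord x) (FreeGroup.reduce_toWord x)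
      obtain ⟨hch, hnz, hprod, hhd⟩ := PP17.tosyl_spec f (FreeGroup.toWord x) hred
      rcases hW : FreeGroup.toWord x with _ | ⟨⟨g0, s0⟩, L'⟩
      · exact hLne hW
      obtain ⟨e0, t0, het, -⟩ := hhd g0 s0 L' hW
      have htne : PP17.tosyl (FreeGroup.toWord x) ≠ [] := by rw [het]; simp
      apply key (PP17.tosyl (FreeGroup.toWord x)) htne hch hnz
      have hfs : (List.map (fun s => (if s.1 then a else b) ^ s.2)
          (PP17.tosyl (FreeGroup.toWord x)))
          = (List.map (fun s => f s.1 ^ s.2) (PP17.tosyl (FreeGroup.toWord x))) := by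
        simp [hf]
      rw [hfs, hprod]
      have : (List.map (fun x => cond x.2 (f x.1) (f x.1)⁻¹) (FreeGroup.toWord x)).prod
          = FreeGroup.lift f x := by
        conv_rhs => rw [← FreeGroup.mk_toWord (x := x)]
        rw [FreeGroup.lift_mk]
      rw [this]
      exact hx
    have hrange : (FreeGroup.lift f).range = Subgroup.closure {a, b} := by
      rw [FreeGroup.range_lift_eq_closure]
      congr 1
      ext y
      constructor
      · rintro ⟨i, rfl⟩
        cases i
        · right; simp [hf]
        · left; simp [hf]
      · rintro (rfl | rfl)
        · exact ⟨true, by simp [hf]⟩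
        · exact ⟨false, by simp [hf]⟩
    exact ⟨(MulEquiv.subgroupCongr hrange.symm).trans (MonoidHom.ofInjective hinj).symm⟩
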